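/- In a trinity, the equivalence classes of A_W = Z^{V∪E∪R}/≈_W containing an element of the form (x_V, 0, 0) form a subgroup isomorphic to Pic(D_V) ≅ Pic^0(D_V) × Z, where ≈_W is white-triangle equivalence. In particular, the classes containing an element (x_V, 0, 0) with deg(x_V) = 0 form a subgroup isomorphic to the sandpile group Pic^0(D_V). -/

import Mathlib

open Finset

/-- A combinatorial trinity: a triangulation of the sphere `S²` whose `0`-simplices are
properly three-colored by `V` (violet), `E` (emerald) and `R` (red).  It is encoded by
its sets `Tw` of white and `Tb` of black triangles, the color of each corner of each
triangle, and the three edge-gluing bijections `σR`, `σE`, `σV` matching each white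
triangle with the black triangle sharing its red (resp. emerald, violet) edge.  The
link conditions state that the triangles around each vertex form a single cycle, and
connectivity of the surface is required; the sphere (Euler) condition
`|V| + |E| + |R| = |Tw| + 2` appears as a hypothesis of the theorems. -/
structure Trinity (V E R Tw Tb : Type) where
  vw : Tw → V
  ew : Tw → E
  rW : Tw → R
  vb : Tb → V
  eb : Tb → E
  rb : Tb → R
  σR : Tw ≃ Tb
  σE : Tw ≃ Tb
  σV : Tw ≃ Tb
  σR_v : ∀ t, vb (σR t) = vw t
  σR_e : ∀ t, eb (σR t) = ew t
  σE_v : ∀ t, vb (σE t) = vw t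
  σE_r : ∀ t, rb (σE t) = rW t
  σV_e : ∀ t, eb (σV t) = ew t
  σV_r : ∀ t, rb (σV t) = rW t
  vsurj : Function.Surjective vw
  esurj : Function.Surjective ew
  rsurj : Function.Surjective rW
  linkV : ∀ t t' : Tw, vw t = vw t' →
    Relation.ReflTransGen (fun a b => σR a = σE b) t t'
  linkE : ∀ t t' : Tw, ew t = ew t' →
    Relation.ReflTransGen (fun a b => σR a = σV b) t t'
  linkR : ∀ t t' : Tw, rW t = rW t' →
    Relation.ReflTransGen (fun a b => σE a = σV b) t t'
  conn : ∀ t t' : Tw, Relation.ReflTransGen (fun a b =>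
    σR a = σE b ∨ σR a = σV b ∨ σE a = σR b ∨ σE a = σV b ∨ σV a = σR b ∨ σV a = σE b) t t'

namespace Trinity

variable {V E R Tw Tb : Type}

/-- The characteristic vector (in `ℤ^{V∪E∪R}`) of a white triangle. -/
def chi [DecidableEq V] [DecidableEq E] [DecidableEq R]
    (S : Trinity V E R Tw Tb) (t : Tw) : (V → ℤ) × (E → ℤ) × (R → ℤ) :=
  (fun v => if S.vw t = v then 1 else 0,
   fun e => if S.ew t = e then 1 else 0,
   fun r => if S.rW t = r then 1 else 0)

/-- The Laplacian of the balanced plane digraph `D_V` applied to `z : V → ℤ`: for each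
white triangle `t`, the corresponding edge of `D_V` points from the violet vertex of
the black triangle `σV t` to the violet vertex of `t` (they share their violet edge),
and firing moves one chip along each such edge. -/
def lapV [Fintype Tw] [DecidableEq V] (S : Trinity V E R Tw Tb) (z : V → ℤ) : V → ℤ :=
  fun u => ∑ t : Tw, z (S.vb (S.σV t)) *
    ((if S.vw t = u then 1 else 0) - (if S.vb (S.σV t) = u then 1 else 0))

/-- Linear equivalence of chip configurations on `D_V`. -/
def linEqV [Fintype Tw] [DecidableEq V] (S : Trinity V E R Tw Tb) (x y : V → ℤ) : Prop :=
  ∃ z : V → ℤ, y = x + S.lapV z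

/-- The Laplacian of the balanced plane digraph `D_E` applied to `z : E → ℤ`. -/
def lapE [Fintype Tw] [DecidableEq E] (S : Trinity V E R Tw Tb) (z : E → ℤ) : E → ℤ :=
  fun u => ∑ t : Tw, z (S.eb (S.σE t)) *
    ((if S.ew t = u then 1 else 0) - (if S.eb (S.σE t) = u then 1 else 0))

/-- Linear equivalence of chip configurations on `D_E`. -/
def linEqE [Fintype Tw] [DecidableEq E] (S : Trinity V E R Tw Tb) (x y : E → ℤ) : Prop :=
  ∃ z : E → ℤ, y = x + S.lapE z

/-- The red graph `G_R`: the bipartite graph on `V ∪ E` formed by the red edges (the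
support simple graph; each red edge lies in a unique white triangle). -/
def SR (S : Trinity V E R Tw Tb) : SimpleGraph (V ⊕ E) where
  Adj a b := ∃ t : Tw, (a = Sum.inl (S.vw t) ∧ b = Sum.inr (S.ew t)) ∨
    (b = Sum.inl (S.vw t) ∧ a = Sum.inr (S.ew t))
  symm := by
    constructor
    rintro a b ⟨t, h | h⟩
    exacts [⟨t, Or.inr h⟩, ⟨t, Or.inl h⟩]
  loopless := by
    constructor
    rintro a ⟨t, ⟨h1, h2⟩ | ⟨h1, h2⟩⟩ <;> subst h1 <;> simp at h2

/-- The violet graph `G_V`: the bipartite graph on `R ∪ E` formed by the violet edges. -/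
def SV (S : Trinity V E R Tw Tb) : SimpleGraph (R ⊕ E) where
  Adj a b := ∃ t : Tw, (a = Sum.inl (S.rW t) ∧ b = Sum.inr (S.ew t)) ∨
    (b = Sum.inl (S.rW t) ∧ a = Sum.inr (S.ew t))
  symm := by
    constructor
    rintro a b ⟨t, h | h⟩
    exacts [⟨t, Or.inr h⟩, ⟨t, Or.inl h⟩]
  loopless := by
    constructor
    rintro a ⟨t, ⟨h1, h2⟩ | ⟨h1, h2⟩⟩ <;> subst h1 <;> simp at h2

/-- `f : E → ℤ` is a hypertree of the red graph `G_R` on `E`. -/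
def hypertreeRE (S : Trinity V E R Tw Tb) (f : E → ℤ) : Prop :=
  ∃ T : SimpleGraph (V ⊕ E), T ≤ S.SR ∧ T.IsTree ∧
    ∀ e : E, ((T.neighborSet (Sum.inr e)).ncard : ℤ) = f e + 1

/-- `f : E → ℤ` is a hypertree of the violet graph `G_V` on `E`. -/
def hypertreeVE (S : Trinity V E R Tw Tb) (f : E → ℤ) : Prop :=
  ∃ T : SimpleGraph (R ⊕ E), T ≤ S.SV ∧ T.IsTree ∧
    ∀ e : E, ((T.neighborSet (Sum.inr e)).ncard : ℤ) = f e + 1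

/-- `f : V → ℤ` is a hypertree of the red graph `G_R` on `V`. -/
def hypertreeRV (S : Trinity V E R Tw Tb) (f : V → ℤ) : Prop :=
  ∃ T : SimpleGraph (V ⊕ E), T ≤ S.SR ∧ T.IsTree ∧
    ∀ v : V, ((T.neighborSet (Sum.inl v)).ncard : ℤ) = f v + 1

/-- The common degree `d(e) = d_{G_R}(e) = d_{G_V}(e)` of an emerald vertex, i.e. the
number of white triangles at `e`. -/
noncomputable def dE (S : Trinity V E R Tw Tb) (e : E) : ℤ := (({t : Tw | S.ew t = e}).ncard : ℤ)

end Trinity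

/-- The Laplacian of `D_V` as an additive homomorphism. -/
def Trinity.lapVHom {V E R Tw Tb : Type} [Fintype Tw] [DecidableEq V]
    (S : Trinity V E R Tw Tb) : (V → ℤ) →+ (V → ℤ) :=
  AddMonoidHom.mk' S.lapV (by
    intro a b
    funext u
    simp [Trinity.lapV, add_mul, Finset.sum_add_distrib])

/-- The degree homomorphism (sum of coordinates). -/
def degHom (V : Type) [Fintype V] : (V → ℤ) →+ ℤ :=
  AddMonoidHom.mk' (fun x => ∑ v, x v) (by
    intro a b
    simp [Finset.sum_add_distrib])

section AuxTrin

open Relation Finset Module Matrix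

namespace TrinAux

variable {V E R Tw Tb : Type}

/-- The permutation of white triangles rotating around red vertices:
`t ↦ σE⁻¹ (σV t)`.  It preserves the red vertex. -/
def phiW (S : Trinity V E R Tw Tb) : Tw ≃ Tw := S.σV.trans S.σE.symm

/-- The permutation of white triangles rotating around violet vertices:
`t ↦ σR⁻¹ (σE t)`.  It preserves the violet vertex. -/
def rhoW (S : Trinity V E R Tw Tb) : Tw ≃ Tw := S.σE.trans S.σR.symm

variable (S : Trinity V E R Tw Tb)

lemma vw_phiW (t : Tw) : S.vw (phiW S t) = S.vb (S.σV t) := by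
  have h := S.σE_v (S.σE.symm (S.σV t))
  simp only [Equiv.apply_symm_apply] at h
  simpa [phiW] using h.symm

lemma rW_phiW (t : Tw) : S.rW (phiW S t) = S.rW t := by
  have h1 := S.σE_r (S.σE.symm (S.σV t))
  simp only [Equiv.apply_symm_apply] at h1
  have h2 := S.σV_r t
  simpa [phiW] using h1.symm.trans h2

lemma vw_rhoW (t : Tw) : S.vw (rhoW S t) = S.vw t := by
  have h1 := S.σR_v (S.σR.symm (S.σE t))
  simp only [Equiv.apply_symm_apply] at h1
  have h2 := S.σE_v t
  simpa [rhoW] using h1.symm.trans h2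

lemma ew_phiW_symm (t : Tw) : S.ew ((phiW S).symm t) = S.ew (rhoW S t) := by
  have hsymm : (phiW S).symm t = S.σV.symm (S.σE t) := rfl
  have h1 := S.σV_e (S.σV.symm (S.σE t))
  simp only [Equiv.apply_symm_apply] at h1
  have h2 := S.σR_e (S.σR.symm (S.σE t))
  simp only [Equiv.apply_symm_apply] at h2
  rw [hsymm, ← h1, h2]
  rfl

section Comps

variable {α : Type} [AddCommGroup α]

/-- The `V`-component of `∑ c t • χ t`. -/
def Vc [Fintype Tw] [DecidableEq V] (c : Tw → α) : V → α :=
  fun v => ∑ t, if S.vw t = v then c t else 0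

/-- The `E`-component of `∑ c t • χ t`. -/
def Ec [Fintype Tw] [DecidableEq E] (c : Tw → α) : E → α :=
  fun e => ∑ t, if S.ew t = e then c t else 0

/-- The `R`-component of `∑ c t • χ t`. -/
def Rc [Fintype Tw] [DecidableEq R] (c : Tw → α) : R → α :=
  fun r => ∑ t, if S.rW t = r then c t else 0

/-- The "potential difference" flow attached to a potential `z` on `V`;
its divergence on `D_V` is `-lapV z` and its divergences on the red and emerald
sides vanish. -/
def Am (z : V → α) : Tw → α := fun t => z (S.vw t) - z (S.vw (phiW S t))

variable [Fintype Tw]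

lemma Ec_Am [DecidableEq E] (z : V → α) : Ec S (Am S z) = 0 := by
  funext e
  show (∑ t, if S.ew t = e then z (S.vw t) - z (S.vw (phiW S t)) else 0) = 0
  have hsplit : ∀ t : Tw, (if S.ew t = e then z (S.vw t) - z (S.vw (phiW S t)) else 0)
      = (if S.ew t = e then z (S.vw t) else 0) -
        (if S.ew t = e then z (S.vw (phiW S t)) else 0) := by
    intro t; split <;> simp
  rw [Finset.sum_congr rfl fun t _ => hsplit t, Finset.sum_sub_distrib]
  have key : (∑ t, if S.ew t = e then z (S.vw (phiW S t)) else 0)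
      = ∑ t, if S.ew t = e then z (S.vw t) else 0 := by
    rw [← Equiv.sum_comp ((rhoW S).symm.trans (phiW S).symm)
      (fun t => if S.ew t = e then z (S.vw (phiW S t)) else 0)]
    refine Finset.sum_congr rfl fun u _ => ?_
    have h1 : S.ew ((phiW S).symm ((rhoW S).symm u)) = S.ew u := by
      rw [ew_phiW_symm S ((rhoW S).symm u), Equiv.apply_symm_apply]
    have h2 : S.vw (phiW S ((phiW S).symm ((rhoW S).symm u))) = S.vw u := by
      rw [Equiv.apply_symm_apply]
      have h := vw_rhoW S ((rhoW S).symm u)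
      rw [Equiv.apply_symm_apply] at h
      exact h.symm
    simp only [Equiv.trans_apply, h1, h2]
  rw [key, sub_self]

lemma Rc_Am [DecidableEq R] (z : V → α) : Rc S (Am S z) = 0 := by
  funext r
  show (∑ t, if S.rW t = r then z (S.vw t) - z (S.vw (phiW S t)) else 0) = 0
  have hsplit : ∀ t : Tw, (if S.rW t = r then z (S.vw t) - z (S.vw (phiW S t)) else 0)
      = (if S.rW t = r then z (S.vw t) else 0) -
        (if S.rW t = r then z (S.vw (phiW S t)) else 0) := by
    intro t; split <;> simp
  rw [Finset.sum_congr rfl fun t _ => hsplit t, Finset.sum_sub_distrib]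
  have key : (∑ t, if S.rW t = r then z (S.vw (phiW S t)) else 0)
      = ∑ t, if S.rW t = r then z (S.vw t) else 0 := by
    rw [← Equiv.sum_comp (phiW S).symm
      (fun t => if S.rW t = r then z (S.vw (phiW S t)) else 0)]
    refine Finset.sum_congr rfl fun u _ => ?_
    have h1 : S.rW ((phiW S).symm u) = S.rW u := by
      have h := rW_phiW S ((phiW S).symm u)
      rw [Equiv.apply_symm_apply] at h
      exact h.symm
    have h2 : S.vw (phiW S ((phiW S).symm u)) = S.vw u := by
      rw [Equiv.apply_symm_apply]
    simp only [h1, h2]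
  rw [key, sub_self]

lemma Vc_Am [DecidableEq V] (z : V → ℤ) : Vc S (Am S z) = - S.lapV z := by
  funext u
  show (∑ t, if S.vw t = u then z (S.vw t) - z (S.vw (phiW S t)) else 0) = - S.lapV z u
  have hsplit : ∀ t : Tw, (if S.vw t = u then z (S.vw t) - z (S.vw (phiW S t)) else 0)
      = (if S.vw t = u then z (S.vw t) else 0) -
        (if S.vw t = u then z (S.vw (phiW S t)) else 0) := by
    intro t; split <;> simp
  rw [Finset.sum_congr rfl fun t _ => hsplit t, Finset.sum_sub_distrib]
  have hR : S.lapV z u = (∑ t, if S.vw t = u then z (S.vw (phiW S t)) else 0)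
      - (∑ t, if S.vw (phiW S t) = u then z (S.vw (phiW S t)) else 0) := by
    unfold Trinity.lapV
    rw [← Finset.sum_sub_distrib]
    refine Finset.sum_congr rfl fun t _ => ?_
    rw [show S.vb (S.σV t) = S.vw (phiW S t) from (vw_phiW S t).symm]
    split_ifs <;> ring
  have hkey : (∑ t, if S.vw (phiW S t) = u then z (S.vw (phiW S t)) else 0)
      = ∑ t, if S.vw t = u then z (S.vw t) else 0 := by
    rw [← Equiv.sum_comp (phiW S).symm
      (fun t => if S.vw (phiW S t) = u then z (S.vw (phiW S t)) else 0)]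
    refine Finset.sum_congr rfl fun s _ => by simp only [Equiv.apply_symm_apply]
  rw [hR, hkey]
  abel

end Comps

section ChiSum

variable [Fintype Tw] [DecidableEq V] [DecidableEq E] [DecidableEq R]

lemma sum_smul_chi (c : Tw → ℤ) :
    (∑ t, c t • S.chi t) = (Vc S c, Ec S c, Rc S c) := by
  refine Prod.ext ?_ (Prod.ext ?_ ?_)
  · rw [Prod.fst_sum]
    funext v
    rw [Finset.sum_apply]
    refine Finset.sum_congr rfl fun t _ => ?_
    simp [Trinity.chi, Pi.smul_apply, smul_eq_mul, mul_ite]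
  · rw [Prod.snd_sum, Prod.fst_sum]
    funext e
    rw [Finset.sum_apply]
    refine Finset.sum_congr rfl fun t _ => ?_
    simp [Trinity.chi, Pi.smul_apply, smul_eq_mul, mul_ite]
  · rw [Prod.snd_sum, Prod.snd_sum]
    funext r
    rw [Finset.sum_apply]
    refine Finset.sum_congr rfl fun t _ => ?_
    simp [Trinity.chi, Pi.smul_apply, smul_eq_mul, mul_ite]

/-- The homomorphism `c ↦ ∑ c t • χ t`. -/
def chiHom : (Tw → ℤ) →+ ((V → ℤ) × (E → ℤ) × (R → ℤ)) :=
  AddMonoidHom.mk' (fun c => ∑ t, c t • S.chi t) (by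
    intro a b
    rw [← Finset.sum_add_distrib]
    exact Finset.sum_congr rfl fun t _ => by rw [Pi.add_apply, add_smul])

lemma mem_Wsub_iff (x : (V → ℤ) × (E → ℤ) × (R → ℤ)) :
    x ∈ AddSubgroup.closure (Set.range S.chi) ↔
      ∃ c : Tw → ℤ, (Vc S c, Ec S c, Rc S c) = x := by
  classical
  constructor
  · intro hx
    have hle : AddSubgroup.closure (Set.range S.chi) ≤ (chiHom S).range := by
      rw [AddSubgroup.closure_le]
      rintro _ ⟨t, rfl⟩
      refine ⟨Pi.single (M := fun _ => ℤ) t 1, ?_⟩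
      have hrfl : (chiHom S) (Pi.single (M := fun _ => ℤ) t 1)
          = ∑ t', Pi.single (M := fun _ => ℤ) t 1 t' • S.chi t' := rfl
      rw [hrfl]
      have : ∀ t' : Tw, Pi.single (M := fun _ => ℤ) t 1 t' • S.chi t'
          = if t' = t then S.chi t' else 0 := by
        intro t'
        by_cases h : t' = t <;> simp [Pi.single_apply, h]
      rw [Finset.sum_congr rfl fun t' _ => this t', Finset.sum_ite_eq' Finset.univ t S.chi]
      simp
    obtain ⟨c, hc⟩ := hle hx
    exact ⟨c, by rw [← sum_smul_chi]; exact hc⟩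
  · rintro ⟨c, rfl⟩
    rw [← sum_smul_chi]
    exact AddSubgroup.sum_mem _ fun t _ =>
      AddSubgroup.zsmul_mem _ (AddSubgroup.subset_closure (Set.mem_range_self t)) _

end ChiSum

include S in
lemma nonempty_Tw [Fintype V] [Fintype E] [Fintype R] [Fintype Tw]
    (heuler : Fintype.card V + Fintype.card E + Fintype.card R = Fintype.card Tw + 2) :
    Nonempty Tw := by
  by_contra h
  rw [not_nonempty_iff] at h
  haveI hV : IsEmpty V := ⟨fun v => by obtain ⟨t, _⟩ := S.vsurj v; exact h.elim t⟩
  haveI hE : IsEmpty E := ⟨fun e => by obtain ⟨t, _⟩ := S.esurj e; exact h.elim t⟩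
  haveI hR : IsEmpty R := ⟨fun r => by obtain ⟨t, _⟩ := S.rsurj r; exact h.elim t⟩
  simp only [Fintype.card_eq_zero] at heuler
  omega

/-- Any function on `V` which is invariant along the arcs of `D_V` is constant. -/
lemma vconst {β : Type*} (g : V → β)
    (hg : ∀ t, g (S.vw t) = g (S.vw (phiW S t))) (u w : V) : g u = g w := by
  have key : ∀ t t' : Tw, g (S.vw t) = g (S.vw t') := by
    intro t t'
    have h := S.conn t t'
    induction h with
    | refl => rfl
    | tail hab hbc ih =>
      rename_i b c
      refine ih.trans ?_
      rcases hbc with h | h | h | h | h | h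
      · -- σR b = σE c
        have : S.vw b = S.vw c := by rw [← S.σR_v b, h, S.σE_v c]
        rw [this]
      · -- σR b = σV c
        have hb : S.vw (phiW S c) = S.vw b := by
          rw [vw_phiW S c, ← h, S.σR_v b]
        rw [← hb, ← hg c]
      · -- σE b = σR c
        have : S.vw b = S.vw c := by rw [← S.σE_v b, h, S.σR_v c]
        rw [this]
      · -- σE b = σV c
        have hb : S.vw (phiW S c) = S.vw b := by
          rw [vw_phiW S c, ← h, S.σE_v b]
        rw [← hb, ← hg c]
      · -- σV b = σR c
        have hb : S.vw (phiW S b) = S.vw c := by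
          rw [vw_phiW S b, h, S.σR_v c]
        rw [hg b, hb]
      · -- σV b = σE c
        have hb : S.vw (phiW S b) = S.vw c := by
          rw [vw_phiW S b, h, S.σE_v c]
        rw [hg b, hb]
  obtain ⟨t, ht⟩ := S.vsurj u
  obtain ⟨t', ht'⟩ := S.vsurj w
  rw [← ht, ← ht']
  exact key t t'

/-- Any function on the node set `R ⊕ E` of the violet graph which is invariant along
its edges is constant. -/
lemma nconst {β : Type*} (q : R ⊕ E → β)
    (hq : ∀ t, q (Sum.inl (S.rW t)) = q (Sum.inr (S.ew t))) (n n' : R ⊕ E) :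
    q n = q n' := by
  have key : ∀ t t' : Tw, q (Sum.inl (S.rW t)) = q (Sum.inl (S.rW t')) := by
    intro t t'
    have h := S.conn t t'
    induction h with
    | refl => rfl
    | tail hab hbc ih =>
      rename_i b c
      refine ih.trans ?_
      rcases hbc with h | h | h | h | h | h
      · -- σR b = σE c
        have hu1 : S.ew (S.σV.symm (S.σR b)) = S.ew b := by
          have h1 := S.σV_e (S.σV.symm (S.σR b))
          rw [Equiv.apply_symm_apply] at h1
          rw [← h1, S.σR_e]
        have hu2 : S.rW (S.σV.symm (S.σR b)) = S.rW c := by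
          have h1 := S.σV_r (S.σV.symm (S.σR b))
          rw [Equiv.apply_symm_apply] at h1
          rw [← h1, h, S.σE_r]
        calc q (Sum.inl (S.rW b)) = q (Sum.inr (S.ew b)) := hq b
          _ = q (Sum.inr (S.ew (S.σV.symm (S.σR b)))) := by rw [hu1]
          _ = q (Sum.inl (S.rW (S.σV.symm (S.σR b)))) := (hq _).symm
          _ = q (Sum.inl (S.rW c)) := by rw [hu2]
      · -- σR b = σV c : ew b = ew c
        have he : S.ew b = S.ew c := by rw [← S.σR_e b, h, S.σV_e]
        rw [hq b, he, ← hq c]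
      · -- σE b = σR c
        have hu1 : S.rW (S.σV.symm (S.σR c)) = S.rW b := by
          have h1 := S.σV_r (S.σV.symm (S.σR c))
          rw [Equiv.apply_symm_apply] at h1
          rw [← h1, ← h, S.σE_r]
        have hu2 : S.ew (S.σV.symm (S.σR c)) = S.ew c := by
          have h1 := S.σV_e (S.σV.symm (S.σR c))
          rw [Equiv.apply_symm_apply] at h1
          rw [← h1, S.σR_e]
        calc q (Sum.inl (S.rW b)) = q (Sum.inl (S.rW (S.σV.symm (S.σR c)))) := by rw [hu1]
          _ = q (Sum.inr (S.ew (S.σV.symm (S.σR c)))) := hq _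
          _ = q (Sum.inr (S.ew c)) := by rw [hu2]
          _ = q (Sum.inl (S.rW c)) := (hq c).symm
      · -- σE b = σV c : rW b = rW c
        have hr : S.rW b = S.rW c := by rw [← S.σE_r b, h, S.σV_r]
        rw [hr]
      · -- σV b = σR c : ew b = ew c
        have he : S.ew b = S.ew c := by rw [← S.σV_e b, h, S.σR_e]
        rw [hq b, he, ← hq c]
      · -- σV b = σE c : rW b = rW c
        have hr : S.rW b = S.rW c := by rw [← S.σV_r b, h, S.σE_r]
        rw [hr]
  have base : ∀ n : R ⊕ E, ∃ t : Tw, q n = q (Sum.inl (S.rW t)) := by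
    intro n
    cases n with
    | inl r =>
      obtain ⟨t, ht⟩ := S.rsurj r
      exact ⟨t, by rw [ht]⟩
    | inr e =>
      obtain ⟨t, ht⟩ := S.esurj e
      exact ⟨t, by rw [← ht]; exact (hq t).symm⟩
  obtain ⟨t, ht⟩ := base n
  obtain ⟨t', ht'⟩ := base n'
  rw [ht, ht', key t t']

section Matrices

variable [Fintype Tw] [Fintype V] [Fintype E] [Fintype R]
  [DecidableEq V] [DecidableEq E] [DecidableEq R]

/-- Incidence matrix of the violet graph `G_V` (nodes `R ⊕ E`, edges `Tw`). -/
noncomputable def Mm : Matrix (R ⊕ E) Tw ℚ :=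
  fun n t => Sum.elim (fun r => if S.rW t = r then 1 else 0)
    (fun e => if S.ew t = e then 1 else 0) n

/-- Matrix of the potential-difference map `Am` over `ℚ`. -/
noncomputable def Bm : Matrix Tw V ℚ :=
  fun t v => (if S.vw t = v then 1 else 0) - (if S.vw (phiW S t) = v then 1 else 0)

lemma Mm_mulVec_inl (c : Tw → ℚ) (r : R) :
    ((Mm S).mulVec c) (Sum.inl r) = Rc S c r := by
  show (∑ t, Mm S (Sum.inl r) t * c t) = ∑ t, if S.rW t = r then c t else 0
  refine Finset.sum_congr rfl fun t _ => ?_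
  simp only [Mm, Sum.elim_inl]
  split <;> simp

lemma Mm_mulVec_inr (c : Tw → ℚ) (e : E) :
    ((Mm S).mulVec c) (Sum.inr e) = Ec S c e := by
  show (∑ t, Mm S (Sum.inr e) t * c t) = ∑ t, if S.ew t = e then c t else 0
  refine Finset.sum_congr rfl fun t _ => ?_
  simp only [Mm, Sum.elim_inr]
  split <;> simp

lemma Bm_mulVec (z : V → ℚ) : (Bm S).mulVec z = Am S z := by
  funext t
  show (∑ v, Bm S t v * z v) = z (S.vw t) - z (S.vw (phiW S t))
  have hsplit : ∀ v : V, Bm S t v * z v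
      = (if S.vw t = v then z v else 0) - (if S.vw (phiW S t) = v then z v else 0) := by
    intro v
    simp only [Bm]
    split_ifs <;> ring
  rw [Finset.sum_congr rfl fun v _ => hsplit v, Finset.sum_sub_distrib]
  rw [Finset.sum_ite_eq Finset.univ (S.vw t) z,
    Finset.sum_ite_eq Finset.univ (S.vw (phiW S t)) z]
  simp

lemma Mt_mulVec (p : R ⊕ E → ℚ) (t : Tw) :
    ((Mm S)ᵀ.mulVec p) t = p (Sum.inl (S.rW t)) + p (Sum.inr (S.ew t)) := by
  show (∑ n, (Mm S)ᵀ t n * p n) = _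
  simp only [Matrix.transpose_apply]
  rw [Fintype.sum_sum_type]
  congr 1
  · have : ∀ r : R, Mm S (Sum.inl r) t * p (Sum.inl r)
        = if S.rW t = r then p (Sum.inl r) else 0 := by
      intro r; simp only [Mm, Sum.elim_inl]; split <;> simp
    rw [Finset.sum_congr rfl fun r _ => this r,
      Finset.sum_ite_eq Finset.univ (S.rW t) (fun r => p (Sum.inl r))]
    simp
  · have : ∀ e : E, Mm S (Sum.inr e) t * p (Sum.inr e)
        = if S.ew t = e then p (Sum.inr e) else 0 := by
      intro e; simp only [Mm, Sum.elim_inr]; split <;> simp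
    rw [Finset.sum_congr rfl fun e _ => this e,
      Finset.sum_ite_eq Finset.univ (S.ew t) (fun e => p (Sum.inr e))]
    simp

lemma ker_Mt (t₀ : Tw) :
    LinearMap.ker ((Mm S)ᵀ.mulVecLin) =
      Submodule.span ℚ {(Sum.elim (fun _ => (1:ℚ)) (fun _ => (-1:ℚ)) : R ⊕ E → ℚ)} := by
  apply le_antisymm
  · intro p hp
    rw [LinearMap.mem_ker] at hp
    have hpt : ∀ t, p (Sum.inl (S.rW t)) + p (Sum.inr (S.ew t)) = 0 := by
      intro t
      have h1 : ((Mm S)ᵀ.mulVec p) t = 0 := by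
        rw [← Matrix.mulVecLin_apply, hp]; rfl
      rwa [Mt_mulVec] at h1
    set q : R ⊕ E → ℚ := Sum.elim (fun r => p (Sum.inl r)) (fun e => -p (Sum.inr e))
      with hqdef
    have hq : ∀ t, q (Sum.inl (S.rW t)) = q (Sum.inr (S.ew t)) := by
      intro t
      simp only [hqdef, Sum.elim_inl, Sum.elim_inr]
      linarith [hpt t]
    have hc := nconst S q hq
    rw [Submodule.mem_span_singleton]
    refine ⟨p (Sum.inl (S.rW t₀)), ?_⟩
    funext n
    cases n with
    | inl r =>
      have h := hc (Sum.inl r) (Sum.inl (S.rW t₀))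
      simp only [hqdef, Sum.elim_inl] at h
      simp only [Pi.smul_apply, Sum.elim_inl, smul_eq_mul, mul_one]
      exact h.symm
    | inr e =>
      have h := hc (Sum.inr e) (Sum.inl (S.rW t₀))
      simp only [hqdef, Sum.elim_inl, Sum.elim_inr] at h
      simp only [Pi.smul_apply, Sum.elim_inr, smul_eq_mul]
      linarith
  · rw [Submodule.span_le, Set.singleton_subset_iff, SetLike.mem_coe, LinearMap.mem_ker]
    funext t
    rw [Matrix.mulVecLin_apply, Mt_mulVec]
    simp

lemma ker_Bm (t₀ : Tw) :
    LinearMap.ker ((Bm S).mulVecLin) = Submodule.span ℚ {(fun _ => (1:ℚ) : V → ℚ)} := by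
  apply le_antisymm
  · intro z hz
    rw [LinearMap.mem_ker] at hz
    have hzt : ∀ t, z (S.vw t) = z (S.vw (phiW S t)) := by
      intro t
      have h1 : Am S z t = 0 := by
        rw [← Bm_mulVec S z, ← Matrix.mulVecLin_apply, hz]; rfl
      have h2 : z (S.vw t) - z (S.vw (phiW S t)) = 0 := h1
      linarith
    have hc := vconst S z hzt
    rw [Submodule.mem_span_singleton]
    refine ⟨z (S.vw t₀), ?_⟩
    funext v
    simp only [Pi.smul_apply, smul_eq_mul, mul_one]
    exact (hc v (S.vw t₀)).symm
  · rw [Submodule.span_le, Set.singleton_subset_iff, SetLike.mem_coe, LinearMap.mem_ker]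
    funext t
    rw [Matrix.mulVecLin_apply, Bm_mulVec]
    simp [Am]

lemma range_Bm (t₀ : Tw)
    (heuler : Fintype.card V + Fintype.card E + Fintype.card R = Fintype.card Tw + 2) :
    LinearMap.range ((Bm S).mulVecLin) = LinearMap.ker ((Mm S).mulVecLin) := by
  have hle : LinearMap.range ((Bm S).mulVecLin) ≤ LinearMap.ker ((Mm S).mulVecLin) := by
    rintro _ ⟨z, rfl⟩
    rw [LinearMap.mem_ker]
    have hAm : (Bm S).mulVecLin z = Am S z := by
      rw [Matrix.mulVecLin_apply, Bm_mulVec]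
    rw [hAm]
    funext n
    rw [Matrix.mulVecLin_apply]
    cases n with
    | inl r =>
      rw [Mm_mulVec_inl, Rc_Am]
      rfl
    | inr e =>
      rw [Mm_mulVec_inr, Ec_Am]
      rfl
  have e1 : Matrix.rank ((Mm S)ᵀ) + 1 = Fintype.card R + Fintype.card E := by
    have hrn := LinearMap.finrank_range_add_finrank_ker ((Mm S)ᵀ.mulVecLin)
    rw [ker_Mt S t₀, finrank_span_singleton (by
      intro hcon
      have := congrFun hcon (Sum.inl (S.rW t₀))
      simp at this)] at hrn
    rw [Module.finrank_fintype_fun_eq_card, Fintype.card_sum] at hrn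
    exact hrn
  have e2 : Matrix.rank (Mm S) +
      finrank ℚ (LinearMap.ker ((Mm S).mulVecLin)) = Fintype.card Tw := by
    have hrn := LinearMap.finrank_range_add_finrank_ker ((Mm S).mulVecLin)
    rwa [Module.finrank_fintype_fun_eq_card] at hrn
  have e3 : Matrix.rank ((Mm S)ᵀ) = Matrix.rank (Mm S) := Matrix.rank_transpose _
  have e4 : finrank ℚ (LinearMap.range ((Bm S).mulVecLin)) + 1 = Fintype.card V := by
    have hrn := LinearMap.finrank_range_add_finrank_ker ((Bm S).mulVecLin)
    rw [ker_Bm S t₀, finrank_span_singleton (by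
      intro hcon
      have := congrFun hcon (S.vw t₀)
      simp at this)] at hrn
    rwa [Module.finrank_fintype_fun_eq_card] at hrn
  exact Submodule.eq_of_le_of_finrank_le hle (by omega)

lemma int_of_den_dvd (q : ℚ) (k : ℕ) (h : q.den ∣ k) :
    ((q.num * ((k / q.den : ℕ) : ℤ) : ℤ) : ℚ) = q * (k : ℚ) := by
  obtain ⟨d, hd⟩ := h
  have hdq : (k / q.den : ℕ) = d := by rw [hd]; exact Nat.mul_div_cancel_left d q.pos
  have hden : ((q.den : ℚ)) ≠ 0 := Nat.cast_ne_zero.2 q.den_nz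
  have hnum : (q.num : ℚ) = q * (q.den : ℚ) := by
    have h1 := Rat.num_div_den q
    rw [div_eq_iff hden] at h1
    exact h1
  rw [hdq, hd]
  push_cast
  rw [hnum]
  ring

lemma exists_int_preimage
    (heuler : Fintype.card V + Fintype.card E + Fintype.card R = Fintype.card Tw + 2)
    (c : Tw → ℤ) (hEc : Ec S c = 0) (hRc : Rc S c = 0) :
    ∃ z : V → ℤ, Am S z = c := by
  obtain ⟨t₀⟩ := nonempty_Tw S heuler
  have hQR : Rc S (fun t => (c t : ℚ)) = 0 := by
    funext r
    have h0 : Rc S c r = 0 := congrFun hRc r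
    have hcast : ((Rc S c r : ℤ) : ℚ) = Rc S (fun t => (c t : ℚ)) r := by
      unfold Rc
      rw [Int.cast_sum]
      exact Finset.sum_congr rfl fun t _ => by split <;> simp
    show Rc S (fun t => (c t : ℚ)) r = 0
    rw [← hcast, h0, Int.cast_zero]
  have hQE : Ec S (fun t => (c t : ℚ)) = 0 := by
    funext e
    have h0 : Ec S c e = 0 := congrFun hEc e
    have hcast : ((Ec S c e : ℤ) : ℚ) = Ec S (fun t => (c t : ℚ)) e := by
      unfold Ec
      rw [Int.cast_sum]
      exact Finset.sum_congr rfl fun t _ => by split <;> simp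
    show Ec S (fun t => (c t : ℚ)) e = 0
    rw [← hcast, h0, Int.cast_zero]
  have hker : (fun t => (c t : ℚ)) ∈ LinearMap.ker ((Mm S).mulVecLin) := by
    rw [LinearMap.mem_ker]
    funext n
    rw [Matrix.mulVecLin_apply]
    cases n with
    | inl r => rw [Mm_mulVec_inl, hQR]; rfl
    | inr e => rw [Mm_mulVec_inr, hQE]; rfl
  rw [← range_Bm S t₀ heuler] at hker
  obtain ⟨z, hz⟩ := hker
  have hz' : ∀ t, z (S.vw t) - z (S.vw (phiW S t)) = (c t : ℚ) := by
    intro t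
    have h1 : Am S z = fun t => (c t : ℚ) := by
      rw [← Bm_mulVec S z, ← Matrix.mulVecLin_apply]
      exact hz
    exact congrFun h1 t
  set k : ℕ := ∏ v, (z v).den with hkdef
  have hkpos : 0 < k := Finset.prod_pos fun v _ => (z v).pos
  have hzden : ∀ v : V, (z v).den ∣ k := fun v =>
    Finset.dvd_prod_of_mem (fun v => (z v).den) (Finset.mem_univ v)
  have hint : ∀ v : V, ∃ m : ℤ, (m : ℚ) = z v * (k : ℚ) := fun v =>
    ⟨(z v).num * ((k / (z v).den : ℕ) : ℤ), int_of_den_dvd (z v) k (hzden v)⟩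
  choose zi hzi using hint
  have hzik : ∀ t, zi (S.vw t) - zi (S.vw (phiW S t)) = c t * (k : ℤ) := by
    intro t
    have hc : ((zi (S.vw t) - zi (S.vw (phiW S t)) : ℤ) : ℚ)
        = ((c t * (k : ℤ) : ℤ) : ℚ) := by
      push_cast
      rw [hzi, hzi, ← sub_mul, hz' t]
    exact_mod_cast hc
  have hmodeq : ∀ u w : V, ((zi u : ZMod k)) = ((zi w : ZMod k)) := by
    refine vconst S (fun v => ((zi v : ZMod k))) ?_
    intro t
    have h1 := hzik t
    have h2 : ((zi (S.vw t) : ZMod k)) - ((zi (S.vw (phiW S t)) : ZMod k))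
        = ((c t : ZMod k)) * ((k : ZMod k)) := by
      have hmap := congrArg (fun x : ℤ => (x : ZMod k)) h1
      push_cast at hmap
      exact hmap
    rw [ZMod.natCast_self, mul_zero, sub_eq_zero] at h2
    exact h2
  set v₀ := S.vw t₀ with hv0
  have hdvd : ∀ v, (k : ℤ) ∣ (zi v - zi v₀) := by
    intro v
    rw [← ZMod.intCast_zmod_eq_zero_iff_dvd]
    push_cast
    rw [hmodeq v v₀, sub_self]
  choose w hw using hdvd
  refine ⟨w, ?_⟩
  funext t
  have h1 := hw (S.vw t)
  have h2 := hw (S.vw (phiW S t))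
  have hk0 : (k : ℤ) ≠ 0 := by exact_mod_cast hkpos.ne'
  have hmain : (k : ℤ) * (w (S.vw t) - w (S.vw (phiW S t))) = (k : ℤ) * c t := by
    have h3 := hzik t
    rw [mul_sub, ← h1, ← h2]
    linarith
  have := mul_left_cancel₀ hk0 hmain
  show w (S.vw t) - w (S.vw (phiW S t)) = c t
  exact this

end Matrices

lemma deg_lapV [Fintype Tw] [Fintype V] [DecidableEq V] (z : V → ℤ) :
    ∑ u, S.lapV z u = 0 := by
  unfold Trinity.lapV
  rw [Finset.sum_comm]
  refine Finset.sum_eq_zero fun t _ => ?_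
  rw [← Finset.mul_sum]
  have h : (∑ u, ((if S.vw t = u then (1:ℤ) else 0) -
      (if S.vb (S.σV t) = u then 1 else 0))) = 0 := by
    rw [Finset.sum_sub_distrib]
    rw [Finset.sum_ite_eq Finset.univ (S.vw t) (fun _ => (1:ℤ)),
      Finset.sum_ite_eq Finset.univ (S.vb (S.σV t)) (fun _ => (1:ℤ))]
    simp
  rw [h, mul_zero]

end TrinAux

end AuxTrin

/-- in the trinity sandpile group `A_W = ℤ^{V∪E∪R}/≈_W`, the classes
containing an element of the form `(x_V, 0, 0)` form a subgroup isomorphic to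
`Pic(D_V) ≅ Pic⁰(D_V) × ℤ`; in particular the classes containing an element
`(x_V, 0, 0)` with `deg x_V = 0` form a subgroup isomorphic to `Pic⁰(D_V)`. -/
theorem trinity_sandpile_subgroup_iso_pic
    {V E R Tw Tb : Type} [Fintype V] [Fintype E] [Fintype R] [Fintype Tw]
    [DecidableEq V] [DecidableEq E] [DecidableEq R]
    (S : Trinity V E R Tw Tb)
    (heuler : Fintype.card V + Fintype.card E + Fintype.card R = Fintype.card Tw + 2) :
    let Wsub : AddSubgroup ((V → ℤ) × (E → ℤ) × (R → ℤ)) :=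
      AddSubgroup.closure (Set.range S.chi)
    let ι : (V → ℤ) →+ ((V → ℤ) × (E → ℤ) × (R → ℤ)) ⧸ Wsub :=
      (QuotientAddGroup.mk' Wsub).comp (AddMonoidHom.inl (V → ℤ) ((E → ℤ) × (R → ℤ)))
    let Λ : AddSubgroup (V → ℤ) := S.lapVHom.range
    let Pic0 : AddSubgroup ((V → ℤ) ⧸ Λ) :=
      AddSubgroup.map (QuotientAddGroup.mk' Λ) (degHom V).ker
    Nonempty (ι.range ≃+ ((V → ℤ) ⧸ Λ)) ∧
    Nonempty (ι.range ≃+ (Pic0 × ℤ)) ∧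
    Nonempty ((AddSubgroup.map ι (degHom V).ker) ≃+ Pic0) := by
  intro Wsub ι Λ Pic0
  classical
  obtain ⟨t₀⟩ := TrinAux.nonempty_Tw S heuler
  -- `ι x = 0` iff `x` is a Laplacian image
  have hmem : ∀ x : V → ℤ, ι x = 0 ↔ x ∈ Λ := by
    intro x
    constructor
    · intro hx
      have hx' : (QuotientAddGroup.mk' Wsub) ((x, (0 : (E → ℤ) × (R → ℤ)))) = 0 := hx
      rw [QuotientAddGroup.mk'_apply, QuotientAddGroup.eq_zero_iff] at hx'
      obtain ⟨c, hc⟩ := (TrinAux.mem_Wsub_iff S _).1 hx'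
      have hcV : TrinAux.Vc S c = x := congrArg Prod.fst hc
      have hcE : TrinAux.Ec S c = 0 := congrArg (fun y => y.2.1) hc
      have hcR : TrinAux.Rc S c = 0 := congrArg (fun y => y.2.2) hc
      obtain ⟨z, hz⟩ := TrinAux.exists_int_preimage S heuler c hcE hcR
      refine ⟨-z, ?_⟩
      have h1 : S.lapVHom (-z) = - S.lapV z := by
        have := map_neg S.lapVHom z
        exact this
      rw [h1, ← TrinAux.Vc_Am S z, hz, hcV]
    · rintro ⟨z, rfl⟩
      have hmem1 : ((S.lapV z, (0 : (E → ℤ) × (R → ℤ)))) ∈ Wsub := by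
        refine (TrinAux.mem_Wsub_iff S _).2 ⟨TrinAux.Am S (-z), ?_⟩
        have hV : TrinAux.Vc S (TrinAux.Am S (-z)) = S.lapV z := by
          rw [TrinAux.Vc_Am]
          have h1 : S.lapV (-z) = - S.lapV z := map_neg S.lapVHom z
          rw [h1, neg_neg]
        rw [hV, TrinAux.Ec_Am, TrinAux.Rc_Am]
        rfl
      show (QuotientAddGroup.mk' Wsub) ((S.lapV z, (0 : (E → ℤ) × (R → ℤ)))) = 0
      rw [QuotientAddGroup.mk'_apply, QuotientAddGroup.eq_zero_iff]
      exact hmem1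
  have hker : ι.ker = Λ := by
    ext x
    rw [AddMonoidHom.mem_ker]
    exact hmem x
  -- first isomorphism
  let e1 : ((V → ℤ) ⧸ Λ) ≃+ ι.range :=
    (QuotientAddGroup.quotientAddEquivOfEq hker.symm).trans
      (QuotientAddGroup.quotientKerEquivRange ι)
  -- degree homomorphism on the Picard group
  have hdeg0 : Λ ≤ (degHom V).ker := by
    rintro _ ⟨z, rfl⟩
    rw [AddMonoidHom.mem_ker]
    exact TrinAux.deg_lapV S z
  let dbar : ((V → ℤ) ⧸ Λ) →+ ℤ := QuotientAddGroup.lift Λ (degHom V) hdeg0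
  have hdbar : ∀ x : V → ℤ, dbar ((QuotientAddGroup.mk' Λ) x) = degHom V x := fun x => rfl
  let g0 : (V → ℤ) ⧸ Λ := (QuotientAddGroup.mk' Λ) (Pi.single (M := fun _ => ℤ) (S.vw t₀) 1)
  have hdeg_single : degHom V (Pi.single (M := fun _ => ℤ) (S.vw t₀) 1) = 1 := by
    show (∑ v, Pi.single (M := fun _ => ℤ) (S.vw t₀) 1 v) = 1
    have h1 : ∀ v : V, Pi.single (M := fun _ => ℤ) (S.vw t₀) 1 v
        = if S.vw t₀ = v then 1 else 0 := by
      intro v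
      rw [Pi.single_apply]
      by_cases h : v = S.vw t₀
      · simp [h]
      · simp [h, Ne.symm h]
    rw [Finset.sum_congr rfl fun v _ => h1 v,
      Finset.sum_ite_eq Finset.univ (S.vw t₀) (fun _ => (1 : ℤ))]
    simp
  have hg0 : dbar g0 = 1 := by
    rw [show dbar g0 = degHom V (Pi.single (M := fun _ => ℤ) (S.vw t₀) 1) from rfl, hdeg_single]
  have hmemPic0 : ∀ x : (V → ℤ) ⧸ Λ, x - dbar x • g0 ∈ Pic0 := by
    intro x
    refine QuotientAddGroup.induction_on x ?_
    intro a
    refine ⟨a - (degHom V a) • Pi.single (M := fun _ => ℤ) (S.vw t₀) 1, ?_, ?_⟩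
    · show a - (degHom V a) • Pi.single (M := fun _ => ℤ) (S.vw t₀) 1 ∈ (degHom V).ker
      rw [AddMonoidHom.mem_ker, map_sub, map_zsmul, hdeg_single]
      simp
    · rw [map_sub, map_zsmul]
      have h2 : dbar ((a : (V → ℤ) ⧸ Λ)) = degHom V a := rfl
      rw [h2]
      rfl
  have hdPic0 : ∀ y ∈ Pic0, dbar y = 0 := by
    rintro _ ⟨a, ha, rfl⟩
    rw [hdbar]
    exact AddMonoidHom.mem_ker.1 ha
  -- splitting of the Picard group by the degree
  let e2 : ((V → ℤ) ⧸ Λ) ≃+ Pic0 × ℤ :=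
    { toFun := fun x => (⟨x - dbar x • g0, hmemPic0 x⟩, dbar x)
      invFun := fun p => (p.1 : (V → ℤ) ⧸ Λ) + p.2 • g0
      left_inv := fun x => by simp
      right_inv := fun p => by
        obtain ⟨⟨y, hy⟩, n⟩ := p
        have h0 : dbar y = 0 := hdPic0 y hy
        have hd : dbar (y + n • g0) = n := by
          rw [map_add, map_zsmul, h0, hg0]
          simp
        refine Prod.ext (Subtype.ext ?_) hd
        show y + n • g0 - dbar (y + n • g0) • g0 = y
        rw [hd]
        abel
      map_add' := fun x y => by
        have hsum : dbar (x + y) = dbar x + dbar y := map_add _ _ _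
        refine Prod.ext (Subtype.ext ?_) hsum
        show (x + y) - dbar (x + y) • g0
            = (x - dbar x • g0) + (y - dbar y • g0)
        rw [hsum, add_zsmul]
        abel }
  -- third isomorphism
  let K : AddSubgroup (V → ℤ) := (degHom V).ker
  let f1 : K →+ ((V → ℤ) × (E → ℤ) × (R → ℤ)) ⧸ Wsub := ι.comp K.subtype
  let f2 : K →+ (V → ℤ) ⧸ Λ := (QuotientAddGroup.mk' Λ).comp K.subtype
  have hk12 : f1.ker = f2.ker := by
    ext y
    simp only [f1, f2, AddMonoidHom.mem_ker, AddMonoidHom.comp_apply]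
    rw [hmem (K.subtype y), QuotientAddGroup.mk'_apply, QuotientAddGroup.eq_zero_iff]
  have hr1 : f1.range = AddSubgroup.map ι K := by
    rw [AddMonoidHom.range_comp, AddSubgroup.range_subtype]
  have hr2 : f2.range = Pic0 := by
    rw [AddMonoidHom.range_comp, AddSubgroup.range_subtype]
  let e3 : (AddSubgroup.map ι K) ≃+ Pic0 :=
    (AddEquiv.addSubgroupCongr hr1).symm.trans
      ((QuotientAddGroup.quotientKerEquivRange f1).symm.trans
        ((QuotientAddGroup.quotientAddEquivOfEq hk12).trans
          ((QuotientAddGroup.quotientKerEquivRange f2).trans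
            (AddEquiv.addSubgroupCongr hr2))))
  exact ⟨⟨e1.symm⟩, ⟨e1.symm.trans e2⟩, ⟨e3⟩⟩
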